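/- Let λ ≥ 2 be a cardinal. Then every maximal chain L of the semilattice E(P_λ) of idempotents of the λ-polycyclic monoid P_λ contains 0, and L \ {0} is order-isomorphic to the chain {0, −1, −2, −3, …} of non-positive integers with the usual order (i.e., L \ {0} is an ω-chain). -/

import Mathlib

universe u v

/-- An inverse semigroup: every element has a unique (von Neumann) inverse. -/
class InverseSemigroup (S : Type u) extends Semigroup S, Inv S where
  mul_inv_mul : ∀ a : S, a * a⁻¹ * a = a
  inv_mul_inv : ∀ a : S, a⁻¹ * a * a⁻¹ = a⁻¹
  inv_unique : ∀ a b : S, a * b * a = a → b * a * b = b → b = a⁻¹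

/-- The λ-polycyclic monoid over the index type `ι` (of cardinality λ), realized as
`(M_λ × M_λ) ∪ {0}` where `M_λ = FreeMonoid ι` is the free monoid on λ generators;
the pair `(a, b)` encodes the element `a⁻¹b` and `none` is the zero. -/
abbrev PolyMon (ι : Type u) : Type u := Option (FreeMonoid ι × FreeMonoid ι)

/-- The nonzero element `a⁻¹b` of the polycyclic monoid. -/
def polyEl {ι : Type u} (a b : FreeMonoid ι) : PolyMon ι := some (a, b)

instance {ι : Type u} : Zero (PolyMon ι) := ⟨none⟩

instance {ι : Type u} : One (PolyMon ι) := ⟨polyEl 1 1⟩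

open Classical in
/-- Multiplication of the polycyclic monoid:
`a⁻¹b · c⁻¹d = (c₁a)⁻¹d` if `c = c₁b`; `= a⁻¹(b₁d)` if `b = b₁c`; `= 0` otherwise,
and `0` is a two-sided zero. -/
noncomputable def polyMul {ι : Type u} (x y : PolyMon ι) : PolyMon ι :=
  Option.bind x fun p => Option.bind y fun q =>
    if h : ∃ c₁ : FreeMonoid ι, q.1 = c₁ * p.2 then some (Classical.choose h * p.1, q.2)
    else if h' : ∃ b₁ : FreeMonoid ι, p.2 = b₁ * q.1 then some (p.1, Classical.choose h' * q.2)
    else none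

noncomputable instance {ι : Type u} : Mul (PolyMon ι) := ⟨polyMul⟩

/-- Inversion of the polycyclic monoid: `(a⁻¹b)⁻¹ = b⁻¹a` and `0⁻¹ = 0`. -/
instance {ι : Type u} : Inv (PolyMon ι) :=
  ⟨fun x => Option.map (fun p => (p.2, p.1)) x⟩

/-- The natural partial order on idempotents: `e ≤ f` iff `ef = fe = e`. -/
def idemLE {ι : Type u} (e f : PolyMon ι) : Prop := e * f = e ∧ f * e = e

/-- The semilattice `E(P_λ)` of idempotents of the polycyclic monoid. -/
def idemE (ι : Type u) : Set (PolyMon ι) := {x | x * x = x}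

/-- A chain of the semilattice of idempotents of the polycyclic monoid. -/
def IsChainIdem {ι : Type u} (L : Set (PolyMon ι)) : Prop :=
  L ⊆ idemE ι ∧ ∀ e ∈ L, ∀ f ∈ L, idemLE e f ∨ idemLE f e

/-- A maximal chain of the semilattice of idempotents of the polycyclic monoid. -/
def IsMaxChainIdem {ι : Type u} (L : Set (PolyMon ι)) : Prop :=
  IsChainIdem L ∧ ∀ L' : Set (PolyMon ι), IsChainIdem L' → L ⊆ L' → L' = L

-- auxiliary lemmas
namespace PolyAux
open Classical

variable {ι : Type u}

lemma zero_mul' (x : PolyMon ι) : (0 : PolyMon ι) * x = 0 := rfl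

lemma mul_zero' (x : PolyMon ι) : x * (0 : PolyMon ι) = 0 := by
  cases x <;> rfl

lemma mul_some (a b c d : FreeMonoid ι) :
    polyEl a b * polyEl c d =
      if h : ∃ c₁ : FreeMonoid ι, c = c₁ * b then some (Classical.choose h * a, d)
      else if h' : ∃ b₁ : FreeMonoid ι, b = b₁ * c then some (a, Classical.choose h' * d)
      else none := rfl

lemma mulEE_right {a b : FreeMonoid ι} (h : ∃ c, b = c * a) :
    polyEl a a * polyEl b b = polyEl b b := by
  rw [mul_some, dif_pos h]
  simp [polyEl, ← Classical.choose_spec h]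

lemma mulEE_left {a b : FreeMonoid ι} (h : ∃ c, a = c * b) :
    polyEl a a * polyEl b b = polyEl a a := by
  by_cases h1 : ∃ c₁ : FreeMonoid ι, b = c₁ * a
  · obtain ⟨c, hc⟩ := h
    obtain ⟨c₁, hc₁⟩ := h1
    have hl := congrArg FreeMonoid.length hc
    have hl₁ := congrArg FreeMonoid.length hc₁
    simp [FreeMonoid.length_mul] at hl hl₁
    have : a = b := by
      have : FreeMonoid.length c = 0 := by omega
      rw [FreeMonoid.length_eq_zero] at this
      rw [hc, this, one_mul]
    subst this
    exact mulEE_right ⟨c₁, hc₁⟩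
  · rw [mul_some, dif_neg h1, dif_pos h]
    simp [polyEl, ← Classical.choose_spec h]

lemma mulEE_zero {a b : FreeMonoid ι} (h1 : ¬∃ c, a = c * b) (h2 : ¬∃ c, b = c * a) :
    polyEl a a * polyEl b b = 0 := by
  rw [mul_some, dif_neg h2, dif_neg h1]
  rfl


lemma idem_iff {x : PolyMon ι} : x ∈ idemE ι ↔ x = 0 ∨ ∃ a, x = polyEl a a := by
  constructor
  · intro hx
    rcases x with _ | ⟨a, b⟩
    · exact Or.inl rfl
    · refine Or.inr ⟨a, ?_⟩
      have hx' : polyEl a b * polyEl a b = polyEl a b := hx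
      rw [mul_some] at hx'
      by_cases h1 : ∃ c₁ : FreeMonoid ι, a = c₁ * b
      · rw [dif_pos h1] at hx'
        have h2 := Classical.choose_spec h1
        have : Classical.choose h1 * a = a := by
          simpa [polyEl] using hx'
        have hone : Classical.choose h1 = 1 := by
          simpa [FreeMonoid.length_mul] using congrArg FreeMonoid.length this
        rw [hone, one_mul] at h2
        rw [h2]; rfl
      · rw [dif_neg h1] at hx'
        by_cases h2 : ∃ b₁ : FreeMonoid ι, b = b₁ * a
        · rw [dif_pos h2] at hx'
          have h3 := Classical.choose_spec h2
          have : Classical.choose h2 * b = b := by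
            simpa [polyEl] using hx'
          have hone : Classical.choose h2 = 1 := by
            simpa [FreeMonoid.length_mul] using congrArg FreeMonoid.length this
          rw [hone, one_mul] at h3
          rw [← h3]; rfl
        · rw [dif_neg h2] at hx'
          exact absurd (hx' : (none : PolyMon ι) = some (a, b)).symm (Option.some_ne_none _)
  · rintro (rfl | ⟨a, rfl⟩)
    · rfl
    · exact mulEE_left ⟨1, (one_mul a).symm⟩

lemma zero_idemLE (x : PolyMon ι) : idemLE 0 x := ⟨zero_mul' x, mul_zero' x⟩

lemma eq_zero_of_idemLE_zero {x : PolyMon ι} (h : idemLE x 0) : x = 0 := by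
  rw [← h.1, mul_zero']

lemma idemLE_iff {a b : FreeMonoid ι} :
    idemLE (polyEl a a) (polyEl b b) ↔ ∃ c, a = c * b := by
  constructor
  · intro h
    by_cases h1 : ∃ c, a = c * b
    · exact h1
    · by_cases h2 : ∃ c, b = c * a
      · have := h.1
        rw [mulEE_right h2] at this
        have hba : b = a := by
          have := congrArg (fun z : PolyMon ι => (z.getD (1,1)).1) this
          simpa [polyEl] using this
        exact ⟨1, by rw [one_mul, hba]⟩
      · have := h.1
        rw [mulEE_zero h1 h2] at this
        exact absurd (this : (none : PolyMon ι) = some (a, a)).symm (Option.some_ne_none _)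
  · intro h
    exact ⟨mulEE_left h, mulEE_right h⟩

lemma idemLE_refl {x : PolyMon ι} (hx : x ∈ idemE ι) : idemLE x x := ⟨hx, hx⟩

lemma concat_cancel {u v : FreeMonoid ι} {x y : ι}
    (h : u * FreeMonoid.of x = v * FreeMonoid.of y) : u = v ∧ x = y := by
  have h' : FreeMonoid.toList u ++ [x] = FreeMonoid.toList v ++ [y] := congrArg FreeMonoid.toList h
  have := List.append_inj' h' rfl
  exact ⟨FreeMonoid.toList.injective this.1, by simpa using this.2⟩

lemma exists_concat {c : FreeMonoid ι} (hc : c ≠ 1) :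
    ∃ c' x, c = c' * FreeMonoid.of x := by
  have hl : FreeMonoid.toList c ≠ [] := fun h => hc (FreeMonoid.toList.injective h)
  refine ⟨FreeMonoid.ofList (FreeMonoid.toList c).dropLast, (FreeMonoid.toList c).getLast hl, ?_⟩
  apply FreeMonoid.toList.injective
  simpa using (List.dropLast_append_getLast hl).symm

end PolyAux

/-- For λ ≥ 2, every maximal chain `L` of the semilattice `E(P_λ)` of idempotents of the
λ-polycyclic monoid contains `0`, and `L \ {0}` is an ω-chain: there is a bijection of
`L \ {0}` with `ℕ` reversing the order, i.e. `L \ {0}` is order-isomorphic to the chain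
`{0, −1, −2, …}` of non-positive integers. -/
theorem statement_10 {ι : Type u} [Nontrivial ι] (L : Set (PolyMon ι))
    (hL : IsMaxChainIdem L) :
    (0 : PolyMon ι) ∈ L ∧
    ∃ g : ↥(L \ {0}) ≃ ℕ, ∀ x y : ↥(L \ {0}), idemLE (x : PolyMon ι) (y : PolyMon ι) ↔ g y ≤ g x := by
  classical
  obtain ⟨⟨hsub, hcmp⟩, hmax⟩ := hL
  have h0 : (0 : PolyMon ι) ∈ L := by
    have hc : IsChainIdem (insert 0 L) := by
      constructor
      · rintro x (rfl | hx)
        · exact rfl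
        · exact hsub hx
      · rintro e (rfl | he) f (rfl | hf)
        · exact Or.inl (PolyAux.zero_idemLE _)
        · exact Or.inl (PolyAux.zero_idemLE _)
        · exact Or.inr (PolyAux.zero_idemLE _)
        · exact hcmp e he f hf
    have h := hmax _ hc (Set.subset_insert _ _)
    rw [← h]; exact Set.mem_insert _ _
  refine ⟨h0, ?_⟩
  set S : Set (FreeMonoid ι) := {a | polyEl a a ∈ L} with hSdef
  have hScmp : ∀ a ∈ S, ∀ b ∈ S, (∃ c, a = c * b) ∨ (∃ c, b = c * a) := by
    intro a ha b hb
    rcases hcmp _ ha _ hb with h | h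
    · exact Or.inl (PolyAux.idemLE_iff.1 h)
    · exact Or.inr (PolyAux.idemLE_iff.1 h)
  have hSuniq : ∀ a ∈ S, ∀ b ∈ S,
      FreeMonoid.length a = FreeMonoid.length b → a = b := by
    intro a ha b hb hlen
    rcases hScmp a ha b hb with ⟨c, hc⟩ | ⟨c, hc⟩ <;>
    · have hl := congrArg FreeMonoid.length hc
      simp [FreeMonoid.length_mul] at hl
      have hc1 : c = 1 := by
        rw [← FreeMonoid.length_eq_zero]; omega
      rw [hc1, one_mul] at hc
      simp [hc]
  have hmem_of_cmp : ∀ w : FreeMonoid ι,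
      (∀ b ∈ S, (∃ c, w = c * b) ∨ (∃ c, b = c * w)) → w ∈ S := by
    intro w hw
    have hwI : polyEl w w ∈ idemE ι := PolyAux.idem_iff.2 (Or.inr ⟨w, rfl⟩)
    have hc : IsChainIdem (insert (polyEl w w) L) := by
      constructor
      · rintro x (rfl | hx)
        · exact hwI
        · exact hsub hx
      · have key : ∀ f ∈ L, idemLE f (polyEl w w) ∨ idemLE (polyEl w w) f := by
          intro f hf
          rcases PolyAux.idem_iff.1 (hsub hf) with rfl | ⟨b, rfl⟩
          · exact Or.inl (PolyAux.zero_idemLE _)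
          · rcases hw b hf with h | h
            · exact Or.inr (PolyAux.idemLE_iff.2 h)
            · exact Or.inl (PolyAux.idemLE_iff.2 h)
        rintro e (rfl | he) f (rfl | hf)
        · exact Or.inl (PolyAux.idemLE_refl hwI)
        · exact (key f hf).symm
        · exact key e he
        · exact hcmp e he f hf
    have h := hmax _ hc (Set.subset_insert _ _)
    show polyEl w w ∈ L
    rw [← h]; exact Set.mem_insert _ _
  have h1S : (1 : FreeMonoid ι) ∈ S :=
    hmem_of_cmp 1 (fun b _ => Or.inr ⟨b, (mul_one b).symm⟩)
  have hex : ∀ n : ℕ, ∃ a ∈ S, FreeMonoid.length a = n := by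
    intro n
    induction n with
    | zero => exact ⟨1, h1S, rfl⟩
    | succ n ih =>
      obtain ⟨a, haS, hlen⟩ := ih
      have hxex : ∃ x : ι, ∀ b ∈ S, FreeMonoid.length a < FreeMonoid.length b →
          ∃ c, b = c * (FreeMonoid.of x * a) := by
        by_cases hB : ∃ b ∈ S, FreeMonoid.length a < FreeMonoid.length b
        · obtain ⟨b, hbS, hblen⟩ := hB
          have hsuf : ∀ b' ∈ S, FreeMonoid.length a < FreeMonoid.length b' →
              ∃ c, b' = c * a ∧ c ≠ 1 := by
            intro b' hb'S hl
            rcases hScmp a haS b' hb'S with ⟨c, hc⟩ | ⟨c, hc⟩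
            · have := congrArg FreeMonoid.length hc
              simp [FreeMonoid.length_mul] at this
              omega
            · refine ⟨c, hc, ?_⟩
              rintro rfl
              rw [one_mul] at hc
              rw [hc] at hl
              omega
          obtain ⟨c, hc, hc1⟩ := hsuf b hbS hblen
          obtain ⟨c', x, hcx⟩ := PolyAux.exists_concat hc1
          refine ⟨x, ?_⟩
          intro b' hb'S hb'len
          obtain ⟨e, he, he1⟩ := hsuf b' hb'S hb'len
          obtain ⟨e', y, hey⟩ := PolyAux.exists_concat he1
          rcases hScmp b hbS b' hb'S with ⟨d, hd⟩ | ⟨d, hd⟩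
          · have hce : c = d * e :=
              mul_right_cancel (b := a) (by rw [← hc, hd, he, ← mul_assoc])
            have hxy := PolyAux.concat_cancel (u := c') (v := d * e') (x := x) (y := y)
              (by rw [← hcx, hce, hey, ← mul_assoc])
            exact ⟨e', by rw [he, hey, ← hxy.2, mul_assoc]⟩
          · exact ⟨d * c', by rw [hd, hc, hcx]; simp [mul_assoc]⟩
        · obtain ⟨x⟩ : Nonempty ι := inferInstance
          exact ⟨x, fun b hb hlb => absurd ⟨b, hb, hlb⟩ hB⟩
      obtain ⟨x, hxP⟩ := hxex
      have hwS : FreeMonoid.of x * a ∈ S := by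
        apply hmem_of_cmp
        intro b hbS
        rcases hScmp a haS b hbS with ⟨c, hc⟩ | ⟨c, hc⟩
        · exact Or.inl ⟨FreeMonoid.of x * c, by rw [hc, mul_assoc]⟩
        · by_cases hc1 : c = 1
          · rw [hc1, one_mul] at hc
            exact Or.inl ⟨FreeMonoid.of x, by rw [hc]⟩
          · have hlb : FreeMonoid.length a < FreeMonoid.length b := by
              have := congrArg FreeMonoid.length hc
              have hcpos : 0 < FreeMonoid.length c := by
                rcases Nat.eq_zero_or_pos (FreeMonoid.length c) with h | h
                · exact absurd (FreeMonoid.length_eq_zero.1 h) hc1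
                · exact h
              simp [FreeMonoid.length_mul] at this
              omega
            exact Or.inr (hxP b hbS hlb)
      refine ⟨FreeMonoid.of x * a, hwS, ?_⟩
      simp [FreeMonoid.length_mul, FreeMonoid.length_of, hlen]
      omega
  -- the bijection
  have hform : ∀ x : ↥(L \ {0}), ∃ a, a ∈ S ∧ (x : PolyMon ι) = polyEl a a := by
    rintro ⟨x, hxL, hx0⟩
    rcases PolyAux.idem_iff.1 (hsub hxL) with rfl | ⟨a, rfl⟩
    · exact absurd rfl hx0
    · exact ⟨a, hxL, rfl⟩
  let f : ↥(L \ {0}) → ℕ := fun x =>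
    (Option.map (fun p : FreeMonoid ι × FreeMonoid ι => FreeMonoid.length p.1) (x : PolyMon ι)).getD 0
  have hfval : ∀ (x : ↥(L \ {0})) (a : FreeMonoid ι), (x : PolyMon ι) = polyEl a a →
      f x = FreeMonoid.length a := by
    intro x a hx
    simp only [f, hx]
    rfl
  have hbij : Function.Bijective f := by
    constructor
    · intro x y hxy
      obtain ⟨a, haS, hxa⟩ := hform x
      obtain ⟨b, hbS, hyb⟩ := hform y
      rw [hfval x a hxa, hfval y b hyb] at hxy
      have := hSuniq a haS b hbS hxy
      apply Subtype.ext
      rw [hxa, hyb, this]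
    · intro n
      obtain ⟨a, haS, hlen⟩ := hex n
      refine ⟨⟨polyEl a a, haS, ?_⟩, ?_⟩
      · intro h
        exact absurd (Set.mem_singleton_iff.1 h : (some (a, a) : PolyMon ι) = none) (Option.some_ne_none _)
      · rw [hfval _ a rfl, hlen]
  refine ⟨Equiv.ofBijective f hbij, ?_⟩
  intro x y
  obtain ⟨a, haS, hxa⟩ := hform x
  obtain ⟨b, hbS, hyb⟩ := hform y
  show idemLE (x : PolyMon ι) (y : PolyMon ι) ↔ f y ≤ f x
  rw [hxa, hyb, hfval x a hxa, hfval y b hyb, PolyAux.idemLE_iff]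
  constructor
  · rintro ⟨c, rfl⟩
    simp [FreeMonoid.length_mul]
  · intro hle
    rcases hScmp a haS b hbS with h | ⟨c, hc⟩
    · exact h
    · have := congrArg FreeMonoid.length hc
      simp [FreeMonoid.length_mul] at this
      have hc1 : c = 1 := by rw [← FreeMonoid.length_eq_zero]; omega
      rw [hc1, one_mul] at hc
      exact ⟨1, by rw [hc, one_mul]⟩
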